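/- Let ξ ∈ ℝ^k with all coordinates nonpositive and let α > 0. Then the supremum of ∑ᵢ ξᵢ/ζᵢ² over all ζ ∈ ℝ^k with strictly positive coordinates satisfying ∑ᵢ ζᵢ² = α equals −(1/α)(∑ᵢ √(−ξᵢ))². -/

import Mathlib

open Finset in
/-- Let ξ ∈ ℝ^k with all coordinates nonpositive and α > 0. Then the supremum of
∑ᵢ ξᵢ/ζᵢ² over ζ with strictly positive coordinates and ∑ᵢ ζᵢ² = α equals
−(1/α)(∑ᵢ √(−ξᵢ))². -/
theorem stmt_1 (k : ℕ) (hk : 0 < k) (ξ : Fin k → ℝ) (hξ : ∀ i, ξ i ≤ 0)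
    (α : ℝ) (hα : 0 < α) :
    sSup {s : ℝ | ∃ ζ : Fin k → ℝ, (∀ i, 0 < ζ i) ∧ (∑ i, (ζ i) ^ 2 = α) ∧
        s = ∑ i, ξ i / (ζ i) ^ 2} =
      -(1 / α) * (∑ i, Real.sqrt (-ξ i)) ^ 2 := by
  set S := ∑ i, Real.sqrt (-ξ i) with hSdef
  have hS0 : 0 ≤ S := Finset.sum_nonneg fun i _ => Real.sqrt_nonneg _
  have hknn : (0:ℝ) < (k:ℝ) := by exact_mod_cast hk
  apply csSup_eq_of_forall_le_of_forall_lt_exists_gt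
  · -- nonempty
    refine ⟨∑ i, ξ i / (Real.sqrt (α / k)) ^ 2, fun _ => Real.sqrt (α / k), ?_, ?_, rfl⟩
    · intro i; exact Real.sqrt_pos.mpr (by positivity)
    · have : Real.sqrt (α / k) ^ 2 = α / k := Real.sq_sqrt (by positivity)
      simp [this, Finset.sum_const, Finset.card_univ]
      field_simp
      rw [Real.sq_sqrt hα.le, Real.sq_sqrt hknn.le]
  · -- upper bound
    rintro s ⟨ζ, hζpos, hζsum, rfl⟩
    have hterm : ∀ i, (Real.sqrt (-ξ i) / ζ i) ^ 2 = (-ξ i) / ζ i ^ 2 := by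
      intro i
      rw [div_pow, Real.sq_sqrt (by linarith [hξ i])]
    have key : S ^ 2 ≤ (∑ i, (-ξ i) / ζ i ^ 2) * α := by
      calc S ^ 2 = (∑ i, (Real.sqrt (-ξ i) / ζ i) * ζ i) ^ 2 := by
            congr 1
            exact Finset.sum_congr rfl fun i _ =>
              (div_mul_cancel₀ _ (hζpos i).ne').symm
        _ ≤ (∑ i, (Real.sqrt (-ξ i) / ζ i) ^ 2) * (∑ i, ζ i ^ 2) :=
            Finset.sum_mul_sq_le_sq_mul_sq _ _ _
        _ = (∑ i, (-ξ i) / ζ i ^ 2) * α := by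
            rw [hζsum]; congr 1; exact Finset.sum_congr rfl fun i _ => hterm i
    have hs : ∑ i, ξ i / ζ i ^ 2 = -(∑ i, (-ξ i) / ζ i ^ 2) := by
      rw [← Finset.sum_neg_distrib]
      exact Finset.sum_congr rfl fun i _ => by ring
    rw [hs, neg_mul, neg_le_neg_iff, one_div, inv_mul_eq_div, div_le_iff₀ hα]
    exact key
  · -- approach
    intro w hw
    set M := -(1 / α) * S ^ 2 with hMdef
    have hMw : 0 < M - w := by linarith
    set ε := α * (M - w) / (2 * k * (S + 1)) with hεdef
    have hεpos : 0 < ε := by positivity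
    have hD : 0 < S + k * ε := by positivity
    set ζ : Fin k → ℝ := fun i => Real.sqrt (α * (Real.sqrt (-ξ i) + ε) / (S + k * ε)) with hζdef
    have hζsq : ∀ i, ζ i ^ 2 = α * (Real.sqrt (-ξ i) + ε) / (S + k * ε) := by
      intro i
      exact Real.sq_sqrt (by positivity)
    refine ⟨∑ i, ξ i / ζ i ^ 2, ⟨ζ, fun i => Real.sqrt_pos.mpr (by positivity), ?_, rfl⟩, ?_⟩
    · simp_rw [hζsq]
      rw [← Finset.sum_div, ← Finset.mul_sum, Finset.sum_add_distrib, Finset.sum_const,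
        Finset.card_univ, Fintype.card_fin, nsmul_eq_mul, ← hSdef]
      field_simp
    · -- value > w
      have hterm : ∀ i, ξ i / ζ i ^ 2 ≥ -(Real.sqrt (-ξ i)) * (S + k * ε) / α := by
        intro i
        rw [hζsq i]
        set t := Real.sqrt (-ξ i) with htdef
        have ht0 : 0 ≤ t := Real.sqrt_nonneg _
        have htsq : t ^ 2 = -ξ i := Real.sq_sqrt (by linarith [hξ i])
        have hξi : ξ i = -(t ^ 2) := by linarith
        rw [hξi, div_div_eq_mul_div]
        rw [ge_iff_le, div_le_div_iff₀ hα (by positivity)]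
        nlinarith [mul_nonneg (mul_nonneg (mul_nonneg hD.le hα.le) ht0) hεpos.le]
      have hsum : ∑ i, ξ i / ζ i ^ 2 ≥ ∑ i, -(Real.sqrt (-ξ i)) * (S + k * ε) / α :=
        Finset.sum_le_sum fun i _ => hterm i
      have hval : ∑ i, -(Real.sqrt (-ξ i)) * (S + k * ε) / α = -S * (S + k * ε) / α := by
        rw [← Finset.sum_div, ← Finset.sum_mul, Finset.sum_neg_distrib, ← hSdef]
      rw [hval] at hsum
      -- -S*(S+kε)/α = M - k*ε*S/α and k*ε*S/α < M - w
      have hεS : k * ε * S / α < M - w := by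
        have h1 : k * ε * S / α = (M - w) * S / (2 * (S + 1)) := by
          rw [hεdef]; field_simp
        rw [h1, div_lt_iff₀ (by linarith : (0:ℝ) < 2 * (S + 1))]
        nlinarith
      have hM2 : -S * (S + k * ε) / α = M - k * ε * S / α := by
        rw [hMdef]; field_simp; ring
      linarith [hsum, hM2, hεS]
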